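/- For every integer d ≥ 4, one has (ln(d+1))/(d−1) < (2·ln d)/d < (ln d)² − (ln(d−1))²; consequently (d+1)^{1/(d−1)} < d^{ln d}/(d−1)^{ln(d−1)}. -/

import Mathlib

open Real Set

lemma aux_logsq_deriv {t : ℝ} (ht : 0 < t) :
    HasDerivAt (fun s : ℝ => Real.log s ^ 2) (2 * Real.log t / t) t := by
  have h : HasDerivAt (fun s : ℝ => Real.log s ^ 2) (((2:ℕ):ℝ) * Real.log t ^ (2 - 1) * t⁻¹) t :=
    (Real.hasDerivAt_log ht.ne').pow 2
  convert h using 1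
  simp [pow_one]
  ring

lemma aux_log_div_self_strictAnti :
    StrictAntiOn (fun t : ℝ => Real.log t / t) (Set.Ici 3) := by
  apply strictAntiOn_of_deriv_neg (convex_Ici 3)
  · apply ContinuousOn.div
    · exact Real.continuousOn_log.mono (by
        intro t ht
        simp only [Set.mem_Ici] at ht
        simp only [Set.mem_compl_iff, Set.mem_singleton_iff]
        intro h; rw [h] at ht; norm_num at ht)
    · exact continuousOn_id
    · intro t ht
      have : (3:ℝ) ≤ t := ht
      intro h; rw [h] at this; norm_num at this
  · intro t ht
    rw [interior_Ici] at ht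
    have ht3 : (3:ℝ) < t := ht
    have ht0 : (0:ℝ) < t := by linarith
    have hd : HasDerivAt (fun s : ℝ => Real.log s / s)
        ((t⁻¹ * t - Real.log t * 1) / t ^ 2) t :=
      (Real.hasDerivAt_log ht0.ne').div (hasDerivAt_id t) ht0.ne'
    rw [hd.deriv]
    have hlog : 1 < Real.log t := by
      rw [Real.lt_log_iff_exp_lt ht0]
      have := Real.exp_one_lt_d9
      linarith
    apply div_neg_of_neg_of_pos
    · rw [inv_mul_cancel₀ ht0.ne']
      linarith
    · positivity

lemma aux_part2 {x : ℝ} (hx : 4 ≤ x) :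
    2 * Real.log x / x < Real.log x ^ 2 - Real.log (x - 1) ^ 2 := by
  have hx1 : (3:ℝ) ≤ x - 1 := by linarith
  obtain ⟨c, hc, hceq⟩ := exists_hasDerivAt_eq_slope (fun s : ℝ => Real.log s ^ 2)
    (fun s : ℝ => 2 * Real.log s / s) (show x - 1 < x by linarith)
    (by
      apply ContinuousOn.pow
      apply Real.continuousOn_log.mono
      intro t ht
      simp only [Set.mem_Icc] at ht
      simp only [Set.mem_compl_iff, Set.mem_singleton_iff]
      intro h; rw [h] at ht; linarith [ht.1])
    (fun t ht => aux_logsq_deriv (by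
      have := ht.1
      simp only [Set.mem_Ioo] at ht
      linarith [ht.1]))
  have hden : x - (x - 1) = 1 := by ring
  rw [hden, div_one] at hceq
  have hc1 : x - 1 < c := hc.1
  have hc2 : c < x := hc.2
  have hlt : Real.log x / x < Real.log c / c :=
    aux_log_div_self_strictAnti (show c ∈ Set.Ici (3:ℝ) by
        simp only [Set.mem_Ici]; linarith)
      (show x ∈ Set.Ici (3:ℝ) by simp only [Set.mem_Ici]; linarith) hc2
  have h1 : 2 * Real.log x / x = 2 * (Real.log x / x) := by ring
  have h2 : 2 * Real.log c / c = 2 * (Real.log c / c) := by ring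
  rw [h2] at hceq
  rw [h1, ← hceq]
  linarith

theorem stmt_17 (d : ℕ) (hd : 4 ≤ d) :
    Real.log ((d : ℝ) + 1) / ((d : ℝ) - 1) < 2 * Real.log d / (d : ℝ) ∧
      2 * Real.log d / (d : ℝ) < (Real.log d) ^ 2 - (Real.log ((d : ℝ) - 1)) ^ 2 ∧
      ((d : ℝ) + 1) ^ ((1 : ℝ) / ((d : ℝ) - 1)) <
        (d : ℝ) ^ Real.log d / ((d : ℝ) - 1) ^ Real.log ((d : ℝ) - 1) := by
  set x : ℝ := (d : ℝ) with hxdef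
  have hx : (4:ℝ) ≤ x := by
    rw [hxdef]; exact_mod_cast hd
  have hx0 : (0:ℝ) < x := by linarith
  have hlogx : 1 < Real.log x := by
    rw [Real.lt_log_iff_exp_lt hx0]
    have := Real.exp_one_lt_d9
    linarith
  -- part 1
  have hcube : (x + 1) ^ 2 < x ^ 3 := by nlinarith
  have h2 : 2 * Real.log (x + 1) < 3 * Real.log x := by
    have h := Real.log_lt_log (show (0:ℝ) < (x+1)^2 by positivity) hcube
    rw [Real.log_pow, Real.log_pow] at h
    push_cast at h
    linarith
  have hpart1 : Real.log (x + 1) / (x - 1) < 2 * Real.log x / x := by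
    rw [div_lt_div_iff₀ (by linarith) hx0]
    nlinarith [mul_lt_mul_of_pos_right h2 hx0,
      mul_nonneg (le_of_lt (lt_trans one_pos hlogx)) (show (0:ℝ) ≤ x - 4 by linarith)]
  have hpart2 := aux_part2 hx
  refine ⟨hpart1, hpart2, ?_⟩
  have e1 : (x + 1) ^ ((1:ℝ) / (x - 1)) = Real.exp (Real.log (x + 1) * (1 / (x - 1))) :=
    Real.rpow_def_of_pos (by linarith) _
  have e2 : x ^ Real.log x = Real.exp (Real.log x * Real.log x) :=
    Real.rpow_def_of_pos hx0 _
  have e3 : (x - 1) ^ Real.log (x - 1) = Real.exp (Real.log (x - 1) * Real.log (x - 1)) :=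
    Real.rpow_def_of_pos (by linarith) _
  rw [e1, e2, e3, ← Real.exp_sub]
  apply Real.exp_lt_exp.mpr
  have h := hpart1.trans hpart2
  have hrw : Real.log (x + 1) * (1 / (x - 1)) = Real.log (x + 1) / (x - 1) := by ring
  rw [hrw]
  nlinarith [h]
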